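/- For n ∈ ℤ define f_n : ℝ² → ℂ by f_n(x, y) = e^{2πi n y} · e^{2πn x − πx²}. Then: (i) each f_n is smooth and satisfies f_n(x, y+1) = f_n(x, y); (ii) each f_n is square-integrable on the cylinder, i.e. ∫_ℝ ∫_0^1 |f_n(x,y)|² dy dx < ∞; (iii) each f_n satisfies the equation ∂f/∂x + i·∂f/∂y = −2πx·f on ℝ²; (iv) for n ≠ m, f_n and f_m are orthogonal: ∫_ℝ ∫_0^1 f_n(x,y) · conj(f_m(x,y)) dy dx = 0; and (v) every smooth function f : ℝ² → ℂ with f(x, y+1) = f(x, y) for all (x,y), with ∫_ℝ ∫_0^1 |f|² dy dx < ∞, and satisfying ∂f/∂x + i·∂f/∂y = −2πx·f, lies in the closed linear span of {f_n : n ∈ ℤ} in L²(ℝ × (0,1)). -/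

import Mathlib

open MeasureTheory

/-- The functions `f_n (x, y) = e^{2πi n y} · e^{2πn x − πx²}` on the plane
(descending to the cylinder `ℝ × ℝ/ℤ`). -/
noncomputable def cylKernelFn (n : ℤ) (p : ℝ × ℝ) : ℂ :=
  Complex.exp (2 * (Real.pi : ℂ) * Complex.I * (n : ℂ) * (p.2 : ℂ)) *
    Complex.exp ((2 * (Real.pi : ℝ) * (n : ℝ) * p.1 - Real.pi * p.1 ^ 2 : ℝ) : ℂ)

open Complex Real Filter
open scoped ENNReal Topology

section CylAux

noncomputable def psiFn (n : ℤ) (p : ℝ × ℝ) : ℂ :=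
  2 * (Real.pi : ℂ) * Complex.I * (n : ℂ) * (p.2 : ℂ) + 2 * (Real.pi : ℂ) * (n : ℂ) * (p.1 : ℂ)
    - (Real.pi : ℂ) * (p.1 : ℂ) ^ 2

lemma cyl_eq_exp (n : ℤ) (p : ℝ × ℝ) : cylKernelFn n p = Complex.exp (psiFn n p) := by
  rw [cylKernelFn, ← Complex.exp_add, psiFn]
  congr 1
  push_cast
  ring

lemma contDiff_psi (n : ℤ) : ContDiff ℝ (⊤ : ℕ∞) (psiFn n) := by
  have hc1 : ContDiff ℝ (⊤ : ℕ∞) (fun p : ℝ × ℝ => (p.1 : ℂ)) :=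
    Complex.ofRealCLM.contDiff.comp contDiff_fst
  have hc2 : ContDiff ℝ (⊤ : ℕ∞) (fun p : ℝ × ℝ => (p.2 : ℂ)) :=
    Complex.ofRealCLM.contDiff.comp contDiff_snd
  unfold psiFn
  exact ((contDiff_const.mul hc2).add (contDiff_const.mul hc1)).sub
    (contDiff_const.mul (hc1.pow 2))

lemma contDiff_cyl (n : ℤ) : ContDiff ℝ (⊤ : ℕ∞) (cylKernelFn n) := by
  have : cylKernelFn n = fun p => Complex.exp (psiFn n p) := funext (cyl_eq_exp n)
  rw [this]
  exact Complex.contDiff_exp.comp (contDiff_psi n)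

noncomputable def reF : ℝ × ℝ →L[ℝ] ℂ := Complex.ofRealCLM.comp (ContinuousLinearMap.fst ℝ ℝ ℝ)
noncomputable def reS : ℝ × ℝ →L[ℝ] ℂ := Complex.ofRealCLM.comp (ContinuousLinearMap.snd ℝ ℝ ℝ)

lemma hasFDerivAt_cyl (n : ℤ) (p : ℝ × ℝ) :
    HasFDerivAt (cylKernelFn n)
      (Complex.exp (psiFn n p) •
        ((2 * (Real.pi : ℂ) * (n : ℂ) - 2 * (Real.pi : ℂ) * (p.1 : ℂ)) • reF
          + (2 * (Real.pi : ℂ) * Complex.I * (n : ℂ)) • reS)) p := by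
  have hfun : cylKernelFn n = fun p => Complex.exp (psiFn n p) := funext (cyl_eq_exp n)
  rw [hfun]
  refine HasFDerivAt.cexp ?_
  have h1 : HasFDerivAt (fun p : ℝ × ℝ => (p.1 : ℂ)) reF p := reF.hasFDerivAt
  have h2 : HasFDerivAt (fun p : ℝ × ℝ => (p.2 : ℂ)) reS p := reS.hasFDerivAt
  have h3 := ((h2.const_mul (2 * (Real.pi : ℂ) * Complex.I * (n : ℂ))).add
      (h1.const_mul (2 * (Real.pi : ℂ) * (n : ℂ)))).sub
      ((h1.mul h1).const_mul (Real.pi : ℂ))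
  have hps : psiFn n = fun x : ℝ × ℝ => 2 * (Real.pi : ℂ) * Complex.I * (n : ℂ) * (x.2 : ℂ)
      + 2 * (Real.pi : ℂ) * (n : ℂ) * (x.1 : ℂ) - (Real.pi : ℂ) * ((x.1 : ℂ) * (x.1 : ℂ)) := by
    funext x; unfold psiFn; ring
  rw [hps]
  refine h3.congr_fderiv ?_
  refine ContinuousLinearMap.ext fun v => ?_
  simp [reF, reS, smul_smul]
  ring

lemma pde_cyl (n : ℤ) (p : ℝ × ℝ) :
    fderiv ℝ (cylKernelFn n) p (1, 0) + Complex.I * fderiv ℝ (cylKernelFn n) p (0, 1)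
      = -(2 * (Real.pi : ℂ) * (p.1 : ℂ)) * cylKernelFn n p := by
  rw [(hasFDerivAt_cyl n p).fderiv, cyl_eq_exp]
  simp [reF, reS, smul_smul]
  ring_nf
  simp [Complex.I_sq]

lemma periodic_cyl (n : ℤ) (p : ℝ × ℝ) : cylKernelFn n (p.1, p.2 + 1) = cylKernelFn n p := by
  unfold cylKernelFn
  congr 1
  have : 2 * (Real.pi : ℂ) * Complex.I * (n : ℂ) * ((p.2 : ℂ) + 1)
      = 2 * (Real.pi : ℂ) * Complex.I * (n : ℂ) * (p.2 : ℂ) + n * (2 * (Real.pi : ℂ) * Complex.I) := by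
    ring
  push_cast
  rw [this, Complex.exp_add, Complex.exp_int_mul_two_pi_mul_I, mul_one]

lemma norm_cyl_sq (n : ℤ) (p : ℝ × ℝ) :
    ‖cylKernelFn n p‖ ^ 2 = Real.exp (4 * Real.pi * n * p.1 - 2 * Real.pi * p.1 ^ 2) := by
  unfold cylKernelFn
  rw [norm_mul, Complex.norm_exp, Complex.norm_exp]
  have h1 : (2 * (Real.pi : ℂ) * Complex.I * (n : ℂ) * (p.2 : ℂ)).re = 0 := by
    simp [Complex.mul_re, Complex.mul_im]
  have h2 : ((2 * Real.pi * (n : ℝ) * p.1 - Real.pi * p.1 ^ 2 : ℝ) : ℂ).re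
      = 2 * Real.pi * n * p.1 - Real.pi * p.1 ^ 2 := Complex.ofReal_re _
  rw [h1, h2, Real.exp_zero, one_mul, sq, ← Real.exp_add]
  ring_nf

lemma gauss_int (n : ℤ) :
    Integrable (fun x : ℝ => Real.exp (4 * Real.pi * n * x - 2 * Real.pi * x ^ 2)) := by
  have h : ∀ x : ℝ, 4 * Real.pi * n * x - 2 * Real.pi * x ^ 2
      = 2 * Real.pi * n ^ 2 + -(2 * Real.pi) * (x - n) ^ 2 := by intro x; ring
  simp_rw [h, Real.exp_add]
  refine Integrable.const_mul ?_ _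
  have := (integrable_exp_neg_mul_sq (b := 2 * Real.pi) (by positivity)).comp_sub_right (n : ℝ)
  simpa [neg_mul] using this

lemma restrict_cyl : (volume : Measure (ℝ × ℝ)).restrict (Set.univ ×ˢ Set.Ioo (0:ℝ) 1)
    = (volume : Measure ℝ).prod ((volume : Measure ℝ).restrict (Set.Ioo (0:ℝ) 1)) := by
  rw [MeasureTheory.Measure.volume_eq_prod, ← Measure.prod_restrict, Measure.restrict_univ]

lemma sq_int_cyl (n : ℤ) :
    (∫⁻ p in Set.univ ×ˢ Set.Ioo (0 : ℝ) 1, ENNReal.ofReal (‖cylKernelFn n p‖ ^ 2)) < ⊤ := by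
  rw [restrict_cyl, lintegral_prod]
  · have : ∀ x : ℝ, (∫⁻ y in Set.Ioo (0:ℝ) 1, ENNReal.ofReal (‖cylKernelFn n (x, y)‖ ^ 2))
        = ENNReal.ofReal (Real.exp (4 * Real.pi * n * x - 2 * Real.pi * x ^ 2)) := by
      intro x
      have : ∀ y : ℝ, ENNReal.ofReal (‖cylKernelFn n (x, y)‖ ^ 2)
          = ENNReal.ofReal (Real.exp (4 * Real.pi * n * x - 2 * Real.pi * x ^ 2)) := by
        intro y; rw [norm_cyl_sq]
      simp_rw [this]
      rw [setLIntegral_const]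
      simp
    simp_rw [this]
    exact (gauss_int n).lintegral_lt_top
  · exact (ENNReal.measurable_ofReal.comp
      (((contDiff_cyl n).continuous.norm.pow 2).measurable)).aemeasurable

noncomputable def auxF (n m : ℤ) (x : ℝ) : ℂ :=
  ((Real.exp (2 * Real.pi * n * x - Real.pi * x ^ 2)
    * Real.exp (2 * Real.pi * m * x - Real.pi * x ^ 2) : ℝ) : ℂ)

noncomputable def auxG (n m : ℤ) (y : ℝ) : ℂ :=
  Complex.exp ((2 * (Real.pi:ℂ) * Complex.I * ((n:ℂ) - (m:ℂ))) * y)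

lemma conj_cyl_snd (m : ℤ) (x : ℝ) :
    (starRingEnd ℂ) (Complex.exp ((2 * Real.pi * (m:ℝ) * x - Real.pi * x ^ 2 : ℝ) : ℂ))
      = Complex.exp ((2 * Real.pi * (m:ℝ) * x - Real.pi * x ^ 2 : ℝ) : ℂ) := by
  rw [← Complex.ofReal_exp, Complex.conj_ofReal]

lemma orth_cyl (n m : ℤ) (h : n ≠ m) :
    (∫ p in Set.univ ×ˢ Set.Ioo (0 : ℝ) 1,
      cylKernelFn n p * (starRingEnd ℂ) (cylKernelFn m p)) = 0 := by
  have key : ∀ p : ℝ × ℝ, cylKernelFn n p * (starRingEnd ℂ) (cylKernelFn m p)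
      = auxF n m p.1 * auxG n m p.2 := by
    intro p
    have hconj : (starRingEnd ℂ) (2 * (Real.pi:ℂ) * Complex.I * (m:ℂ) * (p.2:ℂ))
        = -(2 * (Real.pi:ℂ) * Complex.I * (m:ℂ) * (p.2:ℂ)) := by
      simp only [map_mul, map_ofNat, Complex.conj_I, Complex.conj_ofReal, map_intCast]
      ring
    unfold cylKernelFn auxF auxG
    rw [map_mul, conj_cyl_snd, ← Complex.exp_conj, hconj]
    push_cast
    simp only [← Complex.exp_add]
    congr 1
    ring
  simp_rw [key]
  rw [restrict_cyl, MeasureTheory.integral_prod_mul (auxF n m) (auxG n m)]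
  have hc : (2 * (Real.pi:ℂ) * Complex.I * ((n:ℂ) - (m:ℂ))) ≠ 0 := by
    have hnm : ((n:ℂ) - (m:ℂ)) ≠ 0 := by
      rw [sub_ne_zero]
      exact_mod_cast fun hh => h (by exact_mod_cast hh)
    have hpi : ((Real.pi : ℝ) : ℂ) ≠ 0 := Complex.ofReal_ne_zero.mpr Real.pi_ne_zero
    exact mul_ne_zero (mul_ne_zero (mul_ne_zero two_ne_zero hpi) Complex.I_ne_zero) hnm
  have hz : (∫ y in Set.Ioo (0:ℝ) 1, auxG n m y) = 0 := by
    unfold auxG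
    rw [← integral_Ioc_eq_integral_Ioo, ← intervalIntegral.integral_of_le zero_le_one]
    rw [integral_exp_mul_complex hc]
    have h1 : (2 * (Real.pi:ℂ) * Complex.I * ((n:ℂ) - (m:ℂ))) * ((1:ℝ):ℂ)
        = ((n - m : ℤ) : ℂ) * (2 * (Real.pi:ℂ) * Complex.I) := by push_cast; ring
    rw [h1, Complex.exp_int_mul_two_pi_mul_I]
    simp
  rw [hz, mul_zero]

variable {f : ℝ × ℝ → ℂ}

noncomputable def coefFn (f : ℝ × ℝ → ℂ) (n : ℤ) (x : ℝ) : ℂ :=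
  ∫ y in (0:ℝ)..1, Complex.exp (-(2 * (Real.pi:ℂ) * Complex.I * (n:ℂ) * (y:ℂ))) * f (x, y)

variable {f : ℝ × ℝ → ℂ} (hf : ContDiff ℝ (⊤ : ℕ∞) f)

lemma cont_dx (hf : ContDiff ℝ (⊤ : ℕ∞) f) : Continuous fun p : ℝ × ℝ => fderiv ℝ f p (1, 0) :=
  (hf.continuous_fderiv (by simp)).clm_apply continuous_const

lemma cont_dy (hf : ContDiff ℝ (⊤ : ℕ∞) f) : Continuous fun p : ℝ × ℝ => fderiv ℝ f p (0, 1) :=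
  (hf.continuous_fderiv (by simp)).clm_apply continuous_const

lemma hasDerivAt_slice_x (hf : ContDiff ℝ (⊤ : ℕ∞) f) (y x : ℝ) :
    HasDerivAt (fun x => f (x, y)) (fderiv ℝ f (x, y) (1, 0)) x := by
  have h := (hf.differentiable (by simp) (x, y)).hasFDerivAt
  have hc : HasDerivAt (fun x : ℝ => ((x, y) : ℝ × ℝ)) ((1:ℝ), (0:ℝ)) x :=
    (hasDerivAt_id x).prodMk (hasDerivAt_const x y)
  exact h.comp_hasDerivAt x hc

lemma hasDerivAt_slice_y (hf : ContDiff ℝ (⊤ : ℕ∞) f) (x y : ℝ) :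
    HasDerivAt (fun y => f (x, y)) (fderiv ℝ f (x, y) (0, 1)) y := by
  have h := (hf.differentiable (by simp) (x, y)).hasFDerivAt
  have hc : HasDerivAt (fun y : ℝ => ((x, y) : ℝ × ℝ)) ((0:ℝ), (1:ℝ)) y :=
    (hasDerivAt_const y x).prodMk (hasDerivAt_id y)
  exact h.comp_hasDerivAt y hc

lemma norm_cexp_im (n : ℤ) (y : ℝ) :
    ‖Complex.exp (-(2 * (Real.pi:ℂ) * Complex.I * (n:ℂ) * (y:ℂ)))‖ = 1 := by
  rw [Complex.norm_exp]
  have : (-(2 * (Real.pi:ℂ) * Complex.I * (n:ℂ) * (y:ℂ))).re = 0 := by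
    simp [Complex.mul_re, Complex.mul_im]
  rw [this, Real.exp_zero]

lemma hasDerivAt_coef (hf : ContDiff ℝ (⊤ : ℕ∞) f) (n : ℤ) (x₀ : ℝ) :
    HasDerivAt (coefFn f n)
      (∫ y in (0:ℝ)..1, Complex.exp (-(2 * (Real.pi:ℂ) * Complex.I * (n:ℂ) * (y:ℂ)))
        * fderiv ℝ f (x₀, y) (1, 0)) x₀ := by
  obtain ⟨C, hC⟩ := (((isCompact_Icc (a := x₀ - 1) (b := x₀ + 1)).prod
    (isCompact_Icc (a := (0:ℝ)) (b := 1)))).exists_bound_of_continuousOn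
    ((cont_dx hf).continuousOn)
  have key := intervalIntegral.hasDerivAt_integral_of_dominated_loc_of_deriv_le
    (F := fun x y => Complex.exp (-(2 * (Real.pi:ℂ) * Complex.I * (n:ℂ) * (y:ℂ))) * f (x, y))
    (F' := fun x y => Complex.exp (-(2 * (Real.pi:ℂ) * Complex.I * (n:ℂ) * (y:ℂ)))
      * fderiv ℝ f (x, y) (1, 0))
    (x₀ := x₀) (a := 0) (b := 1) (bound := fun _ => C) (μ := volume) (Metric.ball_mem_nhds x₀ one_pos)
    ?_ ?_ ?_ ?_ ?_ ?_
  · exact key.2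
  · filter_upwards with x
    exact (Continuous.mul (by fun_prop) (hf.continuous.comp (by fun_prop))).aestronglyMeasurable
  · exact (Continuous.mul (by fun_prop) (hf.continuous.comp (by fun_prop))).intervalIntegrable 0 1
  · exact (Continuous.mul (by fun_prop) ((cont_dx hf).comp (by fun_prop))).aestronglyMeasurable
  · filter_upwards with y hy x hx
    rw [norm_mul, norm_cexp_im, one_mul]
    refine hC (x, y) ⟨?_, ?_⟩
    · have := Metric.mem_ball.mp hx
      rw [Real.dist_eq] at this
      constructor <;> [linarith [abs_lt.mp this |>.1]; linarith [abs_lt.mp this |>.2]]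
    · rw [Set.uIoc_of_le (zero_le_one)] at hy
      exact ⟨hy.1.le, hy.2⟩
  · exact intervalIntegrable_const
  · filter_upwards with y hy x hx
    exact (hasDerivAt_slice_x hf y x).const_mul _


lemma hasDerivAt_uexp (n : ℤ) (y : ℝ) :
    HasDerivAt (fun y : ℝ => Complex.exp (-(2 * (Real.pi:ℂ) * Complex.I * (n:ℂ) * (y:ℂ))))
      (-(2 * (Real.pi:ℂ) * Complex.I * (n:ℂ))
        * Complex.exp (-(2 * (Real.pi:ℂ) * Complex.I * (n:ℂ) * (y:ℂ)))) y := by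
  have h0 : HasDerivAt (fun y : ℝ => (y:ℂ)) 1 y := by
    simpa using (hasDerivAt_id y).ofReal_comp
  have h1 := h0.const_mul (-(2 * (Real.pi:ℂ) * Complex.I * (n:ℂ)))
  have h2 := h1.cexp
  simp only [mul_one] at h2
  have hfn : (fun y : ℝ => Complex.exp (-(2 * (Real.pi:ℂ) * Complex.I * (n:ℂ) * (y:ℂ))))
      = fun y : ℝ => Complex.exp (-(2 * (Real.pi:ℂ) * Complex.I * (n:ℂ)) * (y:ℂ)) := by
    funext y; congr 1; ring
  rw [hfn]
  convert h2 using 1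
  ring

lemma parts_coef (hf : ContDiff ℝ (⊤ : ℕ∞) f) (hper : ∀ p : ℝ × ℝ, f (p.1, p.2 + 1) = f p)
    (n : ℤ) (x : ℝ) :
    (∫ y in (0:ℝ)..1, Complex.exp (-(2 * (Real.pi:ℂ) * Complex.I * (n:ℂ) * (y:ℂ)))
        * fderiv ℝ f (x, y) (0, 1))
      = (2 * (Real.pi:ℂ) * Complex.I * (n:ℂ)) * coefFn f n x := by
  have hparts := intervalIntegral.integral_mul_deriv_eq_deriv_mul
    (u := fun y : ℝ => Complex.exp (-(2 * (Real.pi:ℂ) * Complex.I * (n:ℂ) * (y:ℂ))))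
    (u' := fun y : ℝ => -(2 * (Real.pi:ℂ) * Complex.I * (n:ℂ))
      * Complex.exp (-(2 * (Real.pi:ℂ) * Complex.I * (n:ℂ) * (y:ℂ))))
    (v := fun y : ℝ => f (x, y)) (v' := fun y : ℝ => fderiv ℝ f (x, y) (0, 1))
    (a := 0) (b := 1)
    (fun y _ => hasDerivAt_uexp n y) (fun y _ => hasDerivAt_slice_y hf x y)
    ((Continuous.mul continuous_const (by fun_prop)).intervalIntegrable 0 1)
    (((cont_dy hf).comp (by fun_prop : Continuous fun y : ℝ => ((x, y) : ℝ × ℝ))).intervalIntegrable 0 1)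
  rw [hparts]
  beta_reduce
  have e1 : Complex.exp (-(2 * (Real.pi:ℂ) * Complex.I * (n:ℂ) * ((1:ℝ):ℂ))) = 1 := by
    have : -(2 * (Real.pi:ℂ) * Complex.I * (n:ℂ) * ((1:ℝ):ℂ))
        = ((-n : ℤ) : ℂ) * (2 * (Real.pi:ℂ) * Complex.I) := by push_cast; ring
    rw [this, Complex.exp_int_mul_two_pi_mul_I]
  have e0 : Complex.exp (-(2 * (Real.pi:ℂ) * Complex.I * (n:ℂ) * ((0:ℝ):ℂ))) = 1 := by
    norm_num
  have hper1 : f (x, 1) = f (x, 0) := by simpa using hper (x, 0)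
  rw [e1, e0, hper1, sub_self, zero_sub]
  rw [show (fun y : ℝ => -(2 * (Real.pi:ℂ) * Complex.I * (n:ℂ))
      * Complex.exp (-(2 * (Real.pi:ℂ) * Complex.I * (n:ℂ) * (y:ℂ))) * f (x, y))
    = fun y : ℝ => -(2 * (Real.pi:ℂ) * Complex.I * (n:ℂ))
      * (Complex.exp (-(2 * (Real.pi:ℂ) * Complex.I * (n:ℂ) * (y:ℂ))) * f (x, y)) by
    funext y; ring]
  rw [intervalIntegral.integral_const_mul]
  rw [coefFn]
  ring


lemma coef_ode (hf : ContDiff ℝ (⊤ : ℕ∞) f) (hper : ∀ p : ℝ × ℝ, f (p.1, p.2 + 1) = f p)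
    (hpde : ∀ p : ℝ × ℝ, fderiv ℝ f p (1, 0) + Complex.I * fderiv ℝ f p (0, 1)
      = -(2 * (Real.pi : ℂ) * (p.1 : ℂ)) * f p) (n : ℤ) (x : ℝ) :
    HasDerivAt (coefFn f n)
      ((2 * (Real.pi:ℂ) * (n:ℂ) - 2 * (Real.pi:ℂ) * (x:ℂ)) * coefFn f n x) x := by
  have h := hasDerivAt_coef hf n x
  have hrew : (∫ y in (0:ℝ)..1, Complex.exp (-(2 * (Real.pi:ℂ) * Complex.I * (n:ℂ) * (y:ℂ)))
        * fderiv ℝ f (x, y) (1, 0))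
      = (2 * (Real.pi:ℂ) * (n:ℂ) - 2 * (Real.pi:ℂ) * (x:ℂ)) * coefFn f n x := by
    have hsplit : ∀ y : ℝ, Complex.exp (-(2 * (Real.pi:ℂ) * Complex.I * (n:ℂ) * (y:ℂ)))
        * fderiv ℝ f (x, y) (1, 0)
        = -(2 * (Real.pi:ℂ) * (x:ℂ))
            * (Complex.exp (-(2 * (Real.pi:ℂ) * Complex.I * (n:ℂ) * (y:ℂ))) * f (x, y))
          - Complex.I * (Complex.exp (-(2 * (Real.pi:ℂ) * Complex.I * (n:ℂ) * (y:ℂ)))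
            * fderiv ℝ f (x, y) (0, 1)) := by
      intro y
      have := hpde (x, y)
      have hdx : fderiv ℝ f (x, y) (1, 0)
          = -(2 * (Real.pi : ℂ) * (x : ℂ)) * f (x, y) - Complex.I * fderiv ℝ f (x, y) (0, 1) := by
        rw [← this]; ring
      rw [hdx]; ring
    rw [intervalIntegral.integral_congr (fun y _ => hsplit y)]
    rw [intervalIntegral.integral_sub, intervalIntegral.integral_const_mul,
      intervalIntegral.integral_const_mul, ← coefFn, parts_coef hf hper n x]
    · ring_nf
      rw [Complex.I_sq]  -- may not be needed
      ring_nf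
    · exact (continuous_const.mul (Continuous.mul (by fun_prop)
        (hf.continuous.comp (by fun_prop : Continuous fun y : ℝ => ((x, y) : ℝ × ℝ))))).intervalIntegrable 0 1
    · exact (continuous_const.mul (Continuous.mul (by fun_prop)
        ((cont_dy hf).comp (by fun_prop : Continuous fun y : ℝ => ((x, y) : ℝ × ℝ))))).intervalIntegrable 0 1
  rwa [hrew] at h

lemma coef_formula (hf : ContDiff ℝ (⊤ : ℕ∞) f) (hper : ∀ p : ℝ × ℝ, f (p.1, p.2 + 1) = f p)
    (hpde : ∀ p : ℝ × ℝ, fderiv ℝ f p (1, 0) + Complex.I * fderiv ℝ f p (0, 1)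
      = -(2 * (Real.pi : ℂ) * (p.1 : ℂ)) * f p) (n : ℤ) (x : ℝ) :
    coefFn f n x = coefFn f n 0
      * Complex.exp ((2 * Real.pi * (n:ℝ) * x - Real.pi * x ^ 2 : ℝ) : ℂ) := by
  set q : ℝ → ℂ := fun x => (Real.pi:ℂ) * (x:ℂ)^2 - 2 * (Real.pi:ℂ) * (n:ℂ) * (x:ℂ) with hq
  have hqd : ∀ x : ℝ, HasDerivAt q (2 * (Real.pi:ℂ) * (x:ℂ) - 2 * (Real.pi:ℂ) * (n:ℂ)) x := by
    intro x
    have h0 : HasDerivAt (fun y : ℝ => (y:ℂ)) 1 x := by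
      simpa using (hasDerivAt_id x).ofReal_comp
    have h1 : HasDerivAt (fun y : ℝ => (Real.pi:ℂ) * (y:ℂ)^2) ((Real.pi:ℂ) * (2 * (x:ℂ))) x := by
      have hsq : (fun y : ℝ => (Real.pi:ℂ) * (y:ℂ)^2)
          = fun y : ℝ => (Real.pi:ℂ) * ((y:ℂ) * (y:ℂ)) := by funext y; ring
      rw [hsq]
      have := (h0.mul h0).const_mul (Real.pi:ℂ)
      refine this.congr_deriv ?_
      ring
    have h2 : HasDerivAt (fun y : ℝ => 2 * (Real.pi:ℂ) * (n:ℂ) * (y:ℂ))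
        (2 * (Real.pi:ℂ) * (n:ℂ)) x := by
      simpa using h0.const_mul (2 * (Real.pi:ℂ) * (n:ℂ))
    have := h1.sub h2
    refine this.congr_deriv ?_
    ring
  set u : ℝ → ℂ := fun x => coefFn f n x * Complex.exp (q x) with hu
  have hud : ∀ x : ℝ, HasDerivAt u 0 x := by
    intro x
    have h1 := (coef_ode hf hper hpde n x).mul ((hqd x).cexp)
    refine h1.congr_deriv ?_
    ring
  have hconst : u x = u 0 := by
    have hdiff : Differentiable ℝ u := fun x => (hud x).differentiableAt
    have : ∀ x, deriv u x = 0 := fun x => (hud x).deriv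
    exact is_const_of_deriv_eq_zero hdiff this x 0
  have hq0 : q 0 = 0 := by simp [hq]
  have hqx : Complex.exp (q x) ≠ 0 := Complex.exp_ne_zero _
  have : coefFn f n x = u x * Complex.exp (-(q x)) := by
    rw [hu]
    simp only []
    rw [mul_assoc, ← Complex.exp_add]
    simp
  rw [this, hconst, hu]
  simp only []
  rw [hq0, Complex.exp_zero, mul_one]
  congr 1
  rw [hq]
  push_cast
  ring


noncomputable def eFn (n : ℤ) (y : ℝ) : ℂ := Complex.exp (2 * (Real.pi:ℂ) * Complex.I * (n:ℂ) * (y:ℂ))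

lemma conj_eFn (n : ℤ) (y : ℝ) :
    (starRingEnd ℂ) (eFn n y) = Complex.exp (-(2 * (Real.pi:ℂ) * Complex.I * (n:ℂ) * (y:ℂ))) := by
  rw [eFn, ← Complex.exp_conj]
  congr 1
  simp only [map_mul, map_neg, map_ofNat, Complex.conj_I, Complex.conj_ofReal, map_intCast]
  ring

lemma eFn_mul_conj (n m : ℤ) (y : ℝ) :
    eFn n y * (starRingEnd ℂ) (eFn m y)
      = Complex.exp ((2 * (Real.pi:ℂ) * Complex.I * ((n:ℂ) - (m:ℂ))) * (y:ℂ)) := by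
  rw [conj_eFn, eFn, ← Complex.exp_add]
  congr 1
  ring

lemma cont_eFn (n : ℤ) : Continuous (eFn n) := by unfold eFn; fun_prop

lemma orthonormal_eFn (n m : ℤ) :
    (∫ y in (0:ℝ)..1, eFn n y * (starRingEnd ℂ) (eFn m y))
      = if n = m then 1 else 0 := by
  simp_rw [eFn_mul_conj]
  by_cases h : n = m
  · subst h
    simp only [sub_self, mul_zero, zero_mul, Complex.exp_zero, if_true]
    simp
  · rw [if_neg h]
    have hc : (2 * (Real.pi:ℂ) * Complex.I * ((n:ℂ) - (m:ℂ))) ≠ 0 := by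
      have hnm : ((n:ℂ) - (m:ℂ)) ≠ 0 := by
        rw [sub_ne_zero]
        exact_mod_cast fun hh => h (by exact_mod_cast hh)
      have hpi : ((Real.pi : ℝ) : ℂ) ≠ 0 := Complex.ofReal_ne_zero.mpr Real.pi_ne_zero
      exact mul_ne_zero (mul_ne_zero (mul_ne_zero two_ne_zero hpi) Complex.I_ne_zero) hnm
    rw [integral_exp_mul_complex hc]
    have h1 : (2 * (Real.pi:ℂ) * Complex.I * ((n:ℂ) - (m:ℂ))) * ((1:ℝ):ℂ)
        = ((n - m : ℤ) : ℂ) * (2 * (Real.pi:ℂ) * Complex.I) := by push_cast; ring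
    rw [h1, Complex.exp_int_mul_two_pi_mul_I]
    simp

variable {f : ℝ × ℝ → ℂ}

lemma coef_eq_int_conj (f : ℝ × ℝ → ℂ) (n : ℤ) (x : ℝ) :
    coefFn f n x = ∫ y in (0:ℝ)..1, f (x, y) * (starRingEnd ℂ) (eFn n y) := by
  rw [coefFn]
  congr 1
  funext y
  rw [conj_eFn]
  ring

lemma slice_pythagoras (hf : ContDiff ℝ (⊤ : ℕ∞) f) (x : ℝ) (t : Finset ℤ) :
    (∫ y in Set.Ioo (0:ℝ) 1, ‖f (x, y) - ∑ n ∈ t, coefFn f n x * eFn n y‖ ^ 2)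
      = (∫ y in Set.Ioo (0:ℝ) 1, ‖f (x, y)‖ ^ 2) - ∑ n ∈ t, ‖coefFn f n x‖ ^ 2 := by
  set g : ℝ → ℂ := fun y => f (x, y) with hg
  have hgc : Continuous g := hf.continuous.comp (by fun_prop)
  set c : ℤ → ℂ := fun n => coefFn f n x with hc
  set s : ℝ → ℂ := fun y => ∑ n ∈ t, c n * eFn n y with hs
  have hsc : Continuous s := by
    apply continuous_finset_sum
    intro n _
    exact continuous_const.mul (cont_eFn n)
  -- complex-valued integral identities over 0..1
  have hgint : IntervalIntegrable (fun y => g y * (starRingEnd ℂ) (g y)) volume 0 1 :=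
    (hgc.mul (Complex.continuous_conj.comp hgc)).intervalIntegrable 0 1
  have int_g_conj_s : (∫ y in (0:ℝ)..1, g y * (starRingEnd ℂ) (s y))
      = ∑ n ∈ t, ((starRingEnd ℂ) (c n)) * c n := by
    have : ∀ y, g y * (starRingEnd ℂ) (s y)
        = ∑ n ∈ t, (starRingEnd ℂ) (c n) * (g y * (starRingEnd ℂ) (eFn n y)) := by
      intro y
      rw [hs]
      simp only [map_sum, map_mul, Finset.mul_sum]
      refine Finset.sum_congr rfl fun n _ => ?_
      ring
    rw [intervalIntegral.integral_congr (fun y _ => this y)]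
    rw [intervalIntegral.integral_finset_sum]
    · refine Finset.sum_congr rfl fun n _ => ?_
      rw [intervalIntegral.integral_const_mul, ← coef_eq_int_conj]
    · intro n _
      exact (continuous_const.mul (hgc.mul
        (Complex.continuous_conj.comp (cont_eFn n)))).intervalIntegrable 0 1
  have int_s_conj_g : (∫ y in (0:ℝ)..1, s y * (starRingEnd ℂ) (g y))
      = ∑ n ∈ t, c n * (starRingEnd ℂ) (c n) := by
    have hpt : ∀ y, s y * (starRingEnd ℂ) (g y)
        = (starRingEnd ℂ) (g y * (starRingEnd ℂ) (s y)) := by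
      intro y
      simp only [map_mul, Complex.conj_conj]
      ring
    rw [intervalIntegral.integral_congr (fun y _ => hpt y),
      intervalIntegral.integral_of_le zero_le_one, integral_conj,
      ← intervalIntegral.integral_of_le zero_le_one, int_g_conj_s, map_sum]
    refine Finset.sum_congr rfl fun n _ => ?_
    simp only [map_mul, Complex.conj_conj]
  have int_s_conj_s : (∫ y in (0:ℝ)..1, s y * (starRingEnd ℂ) (s y))
      = ∑ n ∈ t, c n * (starRingEnd ℂ) (c n) := by
    have : ∀ y, s y * (starRingEnd ℂ) (s y)
        = ∑ n ∈ t, ∑ m ∈ t, (c n * (starRingEnd ℂ) (c m)) * (eFn n y * (starRingEnd ℂ) (eFn m y)) := by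
      intro y
      rw [hs, map_sum, Finset.sum_mul_sum]
      refine Finset.sum_congr rfl fun n _ => Finset.sum_congr rfl fun m _ => ?_
      simp only [map_mul]
      ring
    rw [intervalIntegral.integral_congr (fun y _ => this y)]
    rw [intervalIntegral.integral_finset_sum]
    · have : ∀ n ∈ t, (∫ y in (0:ℝ)..1,
          ∑ m ∈ t, (c n * (starRingEnd ℂ) (c m)) * (eFn n y * (starRingEnd ℂ) (eFn m y)))
          = c n * (starRingEnd ℂ) (c n) := by
        intro n hn
        rw [intervalIntegral.integral_finset_sum]
        · have : ∀ m ∈ t, (∫ y in (0:ℝ)..1,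
              (c n * (starRingEnd ℂ) (c m)) * (eFn n y * (starRingEnd ℂ) (eFn m y)))
              = if n = m then c n * (starRingEnd ℂ) (c m) else 0 := by
            intro m _
            rw [intervalIntegral.integral_const_mul, orthonormal_eFn]
            by_cases h : n = m <;> simp [h]
          rw [Finset.sum_congr rfl this, Finset.sum_ite_eq t n
            (fun m => c n * (starRingEnd ℂ) (c m)), if_pos hn]
        · intro m _
          exact (continuous_const.mul ((cont_eFn n).mul
            (Complex.continuous_conj.comp (cont_eFn m)))).intervalIntegrable 0 1
      rw [Finset.sum_congr rfl this]
    · intro n _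
      apply Continuous.intervalIntegrable
      apply continuous_finset_sum
      intro m _
      exact continuous_const.mul ((cont_eFn n).mul (Complex.continuous_conj.comp (cont_eFn m)))
  -- combine
  have hdiff : Continuous fun y => g y - s y := hgc.sub hsc
  have expand : (∫ y in (0:ℝ)..1, (g y - s y) * (starRingEnd ℂ) (g y - s y))
      = (∫ y in (0:ℝ)..1, g y * (starRingEnd ℂ) (g y))
        - ↑(∑ n ∈ t, Complex.normSq (c n)) := by
    have hpt : ∀ y, (g y - s y) * (starRingEnd ℂ) (g y - s y)
        = g y * (starRingEnd ℂ) (g y) - g y * (starRingEnd ℂ) (s y)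
          - s y * (starRingEnd ℂ) (g y) + s y * (starRingEnd ℂ) (s y) := by
      intro y
      rw [map_sub]
      ring
    have i1 : IntervalIntegrable (fun y => g y * (starRingEnd ℂ) (g y)) volume 0 1 := hgint
    have i2 : IntervalIntegrable (fun y => g y * (starRingEnd ℂ) (s y)) volume 0 1 :=
      (hgc.mul (Complex.continuous_conj.comp hsc)).intervalIntegrable 0 1
    have i3 : IntervalIntegrable (fun y => s y * (starRingEnd ℂ) (g y)) volume 0 1 :=
      (hsc.mul (Complex.continuous_conj.comp hgc)).intervalIntegrable 0 1
    have i4 : IntervalIntegrable (fun y => s y * (starRingEnd ℂ) (s y)) volume 0 1 :=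
      (hsc.mul (Complex.continuous_conj.comp hsc)).intervalIntegrable 0 1
    rw [intervalIntegral.integral_congr (fun y _ => hpt y),
      intervalIntegral.integral_add ((i1.sub i2).sub i3) i4,
      intervalIntegral.integral_sub (i1.sub i2) i3,
      intervalIntegral.integral_sub i1 i2,
      int_g_conj_s, int_s_conj_g, int_s_conj_s]
    have h1 : ∀ n, (starRingEnd ℂ) (c n) * c n = (Complex.normSq (c n) : ℂ) := by
      intro n
      rw [mul_comm, Complex.mul_conj]
    have h2 : ∀ n, c n * (starRingEnd ℂ) (c n) = (Complex.normSq (c n) : ℂ) := by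
      intro n
      rw [Complex.mul_conj]
    simp_rw [h1, h2]
    push_cast
    ring
  have key : ∀ h : ℝ → ℂ, Continuous h →
      (∫ y in Set.Ioo (0:ℝ) 1, ‖h y‖ ^ 2)
        = (∫ y in (0:ℝ)..1, h y * (starRingEnd ℂ) (h y)).re := by
    intro h hc
    have hpt : ∀ y, ‖h y‖ ^ 2 = (h y * (starRingEnd ℂ) (h y)).re := by
      intro y
      rw [Complex.mul_conj]
      rw [Complex.ofReal_re, Complex.normSq_eq_norm_sq]
    have hint : IntegrableOn (fun y => h y * (starRingEnd ℂ) (h y)) (Set.Ioo (0:ℝ) 1) :=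
      ((hc.mul (Complex.continuous_conj.comp hc)).integrableOn_Icc).mono_set
        Set.Ioo_subset_Icc_self
    rw [intervalIntegral.integral_of_le zero_le_one, integral_Ioc_eq_integral_Ioo]
    simp_rw [hpt]
    rw [← RCLike.re_to_complex]
    rw [← integral_re hint]
    simp [RCLike.re_to_complex]
  calc (∫ y in Set.Ioo (0:ℝ) 1, ‖f (x, y) - ∑ n ∈ t, coefFn f n x * eFn n y‖ ^ 2)
      = (∫ y in (0:ℝ)..1, (g y - s y) * (starRingEnd ℂ) (g y - s y)).re :=
        key (fun y => g y - s y) (hgc.sub hsc)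
    _ = (∫ y in (0:ℝ)..1, g y * (starRingEnd ℂ) (g y)).re - ∑ n ∈ t, Complex.normSq (c n) := by
        rw [expand, Complex.sub_re, Complex.ofReal_re]
    _ = (∫ y in Set.Ioo (0:ℝ) 1, ‖f (x, y)‖ ^ 2) - ∑ n ∈ t, ‖coefFn f n x‖ ^ 2 := by
        rw [← key g hgc]
        congr 1
        refine Finset.sum_congr rfl fun n _ => ?_
        rw [Complex.normSq_eq_norm_sq]


lemma slice_parseval (hf : ContDiff ℝ (⊤ : ℕ∞) f) (hper : ∀ p : ℝ × ℝ, f (p.1, p.2 + 1) = f p)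
    (x : ℝ) :
    HasSum (fun n : ℤ => ‖coefFn f n x‖ ^ 2) (∫ y in Set.Ioo (0:ℝ) 1, ‖f (x, y)‖ ^ 2) := by
  haveI : Fact ((0:ℝ) < 1) := ⟨one_pos⟩
  set g : ℝ → ℂ := fun y => f (x, y) with hgdef
  have hgc : Continuous g := hf.continuous.comp (by fun_prop)
  have hper' : Function.Periodic g 1 := fun y => hper (x, y)
  set G : AddCircle (1:ℝ) → ℂ := hper'.lift with hGdef
  have hGcoe : ∀ y : ℝ, G (y : AddCircle (1:ℝ)) = g y := fun y => hper'.lift_coe y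
  have hGc : Continuous G := by
    rw [(QuotientAddGroup.isQuotientMap_mk (AddSubgroup.zmultiples (1:ℝ))).continuous_iff]
    exact hgc.congr (fun y => (hGcoe y).symm)
  obtain ⟨C, hC⟩ := isCompact_univ.exists_bound_of_continuousOn hGc.continuousOn
  have hGm : MemLp G 2 (@AddCircle.haarAddCircle 1 _) :=
    MemLp.of_bound hGc.aestronglyMeasurable C (ae_of_all _ fun z => hC z trivial)
  set F2 : Lp ℂ 2 (@AddCircle.haarAddCircle 1 _) := hGm.toLp G with hF2
  have hae : (F2 : AddCircle (1:ℝ) → ℂ) =ᵐ[@AddCircle.haarAddCircle 1 _] G := hGm.coeFn_toLp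
  have hcoeff : ∀ n : ℤ, fourierCoeff (F2 : AddCircle (1:ℝ) → ℂ) n = coefFn f n x := by
    intro n
    have h1 : fourierCoeff (F2 : AddCircle (1:ℝ) → ℂ) n = fourierCoeff G n := by
      unfold fourierCoeff
      exact integral_congr_ae (hae.mono fun z hz => by beta_reduce; rw [hz])
    rw [h1, fourierCoeff_eq_intervalIntegral G n 0]
    rw [show ((1:ℝ)/(1:ℝ)) = 1 by norm_num, one_smul, zero_add, coefFn]
    refine intervalIntegral.integral_congr fun y _ => ?_
    rw [hGcoe y, fourier_coe_apply, smul_eq_mul]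
    congr 2
    rw [Complex.ofReal_one, div_one]
    push_cast
    ring
  have hsummable : Summable (fun n : ℤ => ‖coefFn f n x‖ ^ 2) := by
    have hmem := lp.memℓp (fourierBasis.repr F2)
    have := (memℓp_gen_iff (p := 2) (by norm_num)).mp hmem
    have h2 : ∀ n : ℤ, ‖fourierBasis.repr F2 n‖ ^ ((2:ENNReal).toReal) = ‖coefFn f n x‖ ^ 2 := by
      intro n
      rw [fourierBasis_repr, hcoeff n]
      norm_num
    exact (summable_congr h2).mp this
  have htsum : ∑' n : ℤ, ‖coefFn f n x‖ ^ 2 = ∫ y in Set.Ioo (0:ℝ) 1, ‖f (x, y)‖ ^ 2 := by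
    have hp := tsum_sq_fourierCoeff F2
    simp_rw [hcoeff] at hp
    rw [hp]
    have h3 : (∫ t : AddCircle (1:ℝ), ‖(F2 : AddCircle (1:ℝ) → ℂ) t‖ ^ 2 ∂(@AddCircle.haarAddCircle 1 _))
        = ∫ t : AddCircle (1:ℝ), ‖G t‖ ^ 2 ∂(@AddCircle.haarAddCircle 1 _) :=
      integral_congr_ae (hae.mono fun z hz => by beta_reduce; rw [hz])
    rw [h3]
    have h4 : (volume : Measure (AddCircle (1:ℝ))) = (@AddCircle.haarAddCircle 1 _) := by
      rw [AddCircle.volume_eq_smul_haarAddCircle]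
      simp
    rw [← h4, ← AddCircle.integral_preimage (1:ℝ) 0 (fun t => ‖G t‖ ^ 2)]
    rw [zero_add, integral_Ioc_eq_integral_Ioo]
    refine setIntegral_congr_fun measurableSet_Ioo fun y _ => ?_
    rw [hGcoe y]
  have := hsummable.hasSum
  rwa [htsum] at this


lemma tendsto_Icc_atTop : Tendsto (fun N : ℕ => Finset.Icc (-(N:ℤ)) N) atTop atTop := by
  apply tendsto_atTop_finset_of_monotone
  · intro a b hab
    have hab' : (a:ℤ) ≤ b := by exact_mod_cast hab
    exact Finset.Icc_subset_Icc (by omega) hab'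
  · intro x
    exact ⟨x.natAbs, Finset.mem_Icc.mpr (by omega)⟩

lemma approx_main (hf : ContDiff ℝ (⊤ : ℕ∞) f) (hper : ∀ p : ℝ × ℝ, f (p.1, p.2 + 1) = f p)
    (hL2 : (∫⁻ p in Set.univ ×ˢ Set.Ioo (0 : ℝ) 1, ENNReal.ofReal (‖f p‖ ^ 2)) < ⊤)
    (hpde : ∀ p : ℝ × ℝ, fderiv ℝ f p (1, 0) + Complex.I * fderiv ℝ f p (0, 1)
      = -(2 * (Real.pi : ℂ) * (p.1 : ℂ)) * f p) :
    ∀ ε > 0, ∃ (t : Finset ℤ) (c : ℤ → ℂ),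
      (∫⁻ p in Set.univ ×ˢ Set.Ioo (0 : ℝ) 1,
        ENNReal.ofReal (‖f p - ∑ n ∈ t, c n • cylKernelFn n p‖ ^ 2))
        < ENNReal.ofReal ε := by
  intro ε hε
  have hfc := hf.continuous
  set Φ : ℝ → ℝ≥0∞ := fun x => ∫⁻ y in Set.Ioo (0:ℝ) 1, ENNReal.ofReal (‖f (x, y)‖ ^ 2)
    with hΦdef
  have hmeas0 : Measurable fun q : ℝ × ℝ => ENNReal.ofReal (‖f q‖ ^ 2) :=
    ENNReal.measurable_ofReal.comp ((hfc.norm.pow 2).measurable)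
  have hΦmeas : Measurable Φ := by
    exact Measurable.lintegral_prod_right hmeas0
  have hΦtotal : (∫⁻ x, Φ x) < ⊤ := by
    rw [restrict_cyl, lintegral_prod _ hmeas0.aemeasurable] at hL2
    exact hL2
  set F : ℝ → ℝ := fun x => ∫ y in Set.Ioo (0:ℝ) 1, ‖f (x, y)‖ ^ 2 with hFdef
  have hFint : ∀ x : ℝ, IntegrableOn (fun y => ‖f (x, y)‖ ^ 2) (Set.Ioo (0:ℝ) 1) := by
    intro x
    exact (((hfc.comp (by fun_prop : Continuous fun y : ℝ => ((x, y) : ℝ × ℝ))).norm.pow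
      2).integrableOn_Icc).mono_set Set.Ioo_subset_Icc_self
  have hofF : ∀ x, ENNReal.ofReal (F x) = Φ x := fun x =>
    ofReal_integral_eq_lintegral_ofReal (hFint x) (ae_of_all _ fun y => sq_nonneg _)
  have hFmeas : Measurable F := by
    have : F = fun x => (Φ x).toReal := funext fun x => by
      rw [← hofF x, ENNReal.toReal_ofReal (integral_nonneg fun y => sq_nonneg _)]
    rw [this]
    exact hΦmeas.ennreal_toReal
  have hcoefc : ∀ n : ℤ, Continuous (coefFn f n) := fun n =>
    continuous_iff_continuousAt.mpr fun x => (hasDerivAt_coef hf n x).continuousAt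
  set Tail : ℕ → ℝ → ℝ := fun N x =>
    F x - ∑ n ∈ Finset.Icc (-(N:ℤ)) N, ‖coefFn f n x‖ ^ 2 with hTail
  have hTail_meas : ∀ N, Measurable fun x => ENNReal.ofReal (Tail N x) := by
    intro N
    apply ENNReal.measurable_ofReal.comp
    apply hFmeas.sub
    exact (continuous_finset_sum _ fun n _ => (hcoefc n).norm.pow 2).measurable
  have hTail_le : ∀ N, ∀ᵐ x : ℝ, ENNReal.ofReal (Tail N x) ≤ Φ x := by
    intro N
    refine ae_of_all _ fun x => ?_
    rw [← hofF x]
    exact ENNReal.ofReal_le_ofReal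
      (sub_le_self _ (Finset.sum_nonneg fun n _ => sq_nonneg _))
  have hTail_tendsto : ∀ᵐ x : ℝ, Tendsto (fun N => ENNReal.ofReal (Tail N x)) atTop (𝓝 0) := by
    refine ae_of_all _ fun x => ?_
    have hp := slice_parseval hf hper x
    have h1 : Tendsto (fun N : ℕ => ∑ n ∈ Finset.Icc (-(N:ℤ)) N, ‖coefFn f n x‖ ^ 2)
        atTop (𝓝 (F x)) := hp.comp tendsto_Icc_atTop
    have h2 : Tendsto (fun N => Tail N x) atTop (𝓝 0) := by
      have := tendsto_const_nhds (x := F x) (f := atTop (α := ℕ)) |>.sub h1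
      rwa [sub_self] at this
    have := ENNReal.tendsto_ofReal h2
    rwa [ENNReal.ofReal_zero] at this
  have hlim : Tendsto (fun N => ∫⁻ x, ENNReal.ofReal (Tail N x)) atTop (𝓝 0) := by
    have h0 : (0 : ℝ≥0∞) = ∫⁻ _ : ℝ, (fun _ => (0:ℝ≥0∞)) 0 := by simp
    have := tendsto_lintegral_of_dominated_convergence Φ hTail_meas hTail_le hΦtotal.ne
      hTail_tendsto
    simpa using this
  have hev := hlim.eventually_lt_const (by positivity : (0:ℝ≥0∞) < ENNReal.ofReal ε)
  obtain ⟨N, hN⟩ := hev.exists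
  refine ⟨Finset.Icc (-(N:ℤ)) N, fun n => coefFn f n 0, ?_⟩
  -- rewrite the goal integral
  have hkey : (∫⁻ p in Set.univ ×ˢ Set.Ioo (0 : ℝ) 1,
      ENNReal.ofReal (‖f p - ∑ n ∈ Finset.Icc (-(N:ℤ)) N, coefFn f n 0 • cylKernelFn n p‖ ^ 2))
      = ∫⁻ x, ENNReal.ofReal (Tail N x) := by
    have hsum_eq : ∀ x y : ℝ, (∑ n ∈ Finset.Icc (-(N:ℤ)) N, coefFn f n 0 • cylKernelFn n (x, y))
        = ∑ n ∈ Finset.Icc (-(N:ℤ)) N, coefFn f n x * eFn n y := by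
      intro x y
      refine Finset.sum_congr rfl fun n _ => ?_
      rw [smul_eq_mul, coef_formula hf hper hpde n x, cylKernelFn, eFn]
      ring
    have hmeas1 : Measurable fun q : ℝ × ℝ =>
        ENNReal.ofReal (‖f q - ∑ n ∈ Finset.Icc (-(N:ℤ)) N, coefFn f n 0 • cylKernelFn n q‖ ^ 2) := by
      apply ENNReal.measurable_ofReal.comp
      apply Continuous.measurable
      apply Continuous.pow
      apply Continuous.norm
      apply hfc.sub
      apply continuous_finset_sum
      intro n _
      exact continuous_const.mul
        (by unfold cylKernelFn; fun_prop : Continuous fun q : ℝ × ℝ => cylKernelFn n q)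
    rw [restrict_cyl, lintegral_prod _ hmeas1.aemeasurable]
    refine lintegral_congr fun x => ?_
    have hdiffc : Continuous fun y : ℝ =>
        f (x, y) - ∑ n ∈ Finset.Icc (-(N:ℤ)) N, coefFn f n x * eFn n y := by
      apply Continuous.sub
      · exact hfc.comp (by fun_prop)
      · exact continuous_finset_sum _ fun n _ => continuous_const.mul (cont_eFn n)
    have step1 : (∫⁻ y in Set.Ioo (0:ℝ) 1, ENNReal.ofReal
        (‖f (x, y) - ∑ n ∈ Finset.Icc (-(N:ℤ)) N, coefFn f n 0 • cylKernelFn n (x, y)‖ ^ 2))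
        = ∫⁻ y in Set.Ioo (0:ℝ) 1, ENNReal.ofReal
        (‖f (x, y) - ∑ n ∈ Finset.Icc (-(N:ℤ)) N, coefFn f n x * eFn n y‖ ^ 2) := by
      refine lintegral_congr fun y => ?_
      rw [hsum_eq x y]
    rw [step1, ← ofReal_integral_eq_lintegral_ofReal
      (f := fun y => ‖f (x, y) - ∑ n ∈ Finset.Icc (-(N:ℤ)) N, coefFn f n x * eFn n y‖ ^ 2) (μ := volume.restrict (Set.Ioo (0:ℝ) 1))
      (show IntegrableOn (fun y =>
        ‖f (x, y) - ∑ n ∈ Finset.Icc (-(N:ℤ)) N, coefFn f n x * eFn n y‖ ^ 2) (Set.Ioo (0:ℝ) 1) volume from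
        ((hdiffc.norm.pow 2).integrableOn_Icc).mono_set Set.Ioo_subset_Icc_self)
      (ae_of_all _ fun y => sq_nonneg _)]
    rw [slice_pythagoras hf x (Finset.Icc (-(N:ℤ)) N)]
  rw [hkey]
  exact hN


end CylAux

/-- (i) each `f_n` is smooth and `1`-periodic in `y`;
(ii) each `f_n` is square-integrable on the cylinder `ℝ × (0,1)`;
(iii) each `f_n` solves `∂f/∂x + i ∂f/∂y = −2πx·f`;
(iv) `f_n ⊥ f_m` in `L²(ℝ × (0,1))` for `n ≠ m`;
(v) every smooth, `1`-periodic-in-`y`, square-integrable solution of the same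
equation lies in the closed linear span of `{f_n : n ∈ ℤ}` in `L²(ℝ × (0,1))`,
i.e. it can be `L²`-approximated arbitrarily well by finite linear combinations
of the `f_n`. -/
theorem statement5 :
    (∀ n : ℤ, ContDiff ℝ (⊤ : ℕ∞) (cylKernelFn n) ∧
      ∀ p : ℝ × ℝ, cylKernelFn n (p.1, p.2 + 1) = cylKernelFn n p) ∧
    (∀ n : ℤ,
      (∫⁻ p in Set.univ ×ˢ Set.Ioo (0 : ℝ) 1,
        ENNReal.ofReal (‖cylKernelFn n p‖ ^ 2)) < ⊤) ∧
    (∀ (n : ℤ) (p : ℝ × ℝ),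
      fderiv ℝ (cylKernelFn n) p (1, 0) + Complex.I * fderiv ℝ (cylKernelFn n) p (0, 1)
        = -(2 * (Real.pi : ℂ) * (p.1 : ℂ)) * cylKernelFn n p) ∧
    (∀ n m : ℤ, n ≠ m →
      (∫ p in Set.univ ×ˢ Set.Ioo (0 : ℝ) 1,
        cylKernelFn n p * (starRingEnd ℂ) (cylKernelFn m p)) = 0) ∧
    (∀ f : ℝ × ℝ → ℂ, ContDiff ℝ (⊤ : ℕ∞) f →
      (∀ p : ℝ × ℝ, f (p.1, p.2 + 1) = f p) →
      (∫⁻ p in Set.univ ×ˢ Set.Ioo (0 : ℝ) 1, ENNReal.ofReal (‖f p‖ ^ 2)) < ⊤ →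
      (∀ p : ℝ × ℝ, fderiv ℝ f p (1, 0) + Complex.I * fderiv ℝ f p (0, 1)
        = -(2 * (Real.pi : ℂ) * (p.1 : ℂ)) * f p) →
      ∀ ε > 0, ∃ (t : Finset ℤ) (c : ℤ → ℂ),
        (∫⁻ p in Set.univ ×ˢ Set.Ioo (0 : ℝ) 1,
          ENNReal.ofReal (‖f p - ∑ n ∈ t, c n • cylKernelFn n p‖ ^ 2))
          < ENNReal.ofReal ε) := by
  refine ⟨fun n => ⟨contDiff_cyl n, periodic_cyl n⟩, sq_int_cyl, pde_cyl, orth_cyl, ?_⟩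
  intro f hf hper hL2 hpde
  exact approx_main hf hper hL2 hpde
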